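/- arXiv:1101.5091 — 5 statements merged into one kernel-verified Lean document; each statement's English description precedes it below -/
import Mathlib

section
/- Let 𝒳 be a nonempty finite type and for m = 1, 2 let η_m : 𝒳 → ℝ^{p_m} be a potential function, defining the Gibbs random field likelihood f_m(y|θ_m) = exp(⟨θ_m, η_m(y)⟩) / Σ_{z ∈ 𝒳} exp(⟨θ_m, η_m(z)⟩) for θ_m ∈ ℝ^{p_m}. Let η(y) = (η_1(y), η_2(y)) be the concatenated statistic. Then for any y ∈ 𝒳 and any prior probability measures π_1 on ℝ^{p_1} and π_2 on ℝ^{p_2} for which all the integrals below are finite and the denominators nonzero, the exact Bayes factor equals the Bayes factor based on η: (∫ f_1(y|θ_1) dπ_1) / (∫ f_2(y|θ_2) dπ_2) = (∫ P_{θ_1}^{(1)}[η(Z) = η(y)] dπ_1) / (∫ P_{θ_2}^{(2)}[η(Z) = η(y)] dπ_2), where P_θ^{(m)}[η(Z) = η(y)] = Σ_{z : η(z) = η(y)} f_m(z|θ). -/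
open MeasureTheory Matrix Finset

/-- For two Gibbs random fields on a finite state space `𝒳`, with potentials `η₁, η₂`, the
exact Bayes factor equals the Bayes factor based on the concatenated statistic
`η(y) = (η₁(y), η₂(y))`: the concatenation of the model-wise sufficient statistics is
sufficient across models. -/
theorem gibbs_random_field_bayes_factor_exact
    {𝒳 : Type*} [Fintype 𝒳] [Nonempty 𝒳] [DecidableEq 𝒳]
    {p₁ p₂ : ℕ} (η₁ : 𝒳 → (Fin p₁ → ℝ)) (η₂ : 𝒳 → (Fin p₂ → ℝ))
    (f₁ : 𝒳 → (Fin p₁ → ℝ) → ℝ) (f₂ : 𝒳 → (Fin p₂ → ℝ) → ℝ)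
    (hf₁ : ∀ y θ, f₁ y θ = Real.exp (θ ⬝ᵥ η₁ y) / ∑ z : 𝒳, Real.exp (θ ⬝ᵥ η₁ z))
    (hf₂ : ∀ y θ, f₂ y θ = Real.exp (θ ⬝ᵥ η₂ y) / ∑ z : 𝒳, Real.exp (θ ⬝ᵥ η₂ z))
    (π₁ : Measure (Fin p₁ → ℝ)) (π₂ : Measure (Fin p₂ → ℝ))
    [IsProbabilityMeasure π₁] [IsProbabilityMeasure π₂]
    (y : 𝒳)
    (hint₁ : Integrable (fun θ => f₁ y θ) π₁)
    (hint₂ : Integrable (fun θ => f₂ y θ) π₂)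
    (hintη₁ : Integrable
      (fun θ => ∑ z ∈ univ.filter (fun z : 𝒳 => η₁ z = η₁ y ∧ η₂ z = η₂ y), f₁ z θ) π₁)
    (hintη₂ : Integrable
      (fun θ => ∑ z ∈ univ.filter (fun z : 𝒳 => η₁ z = η₁ y ∧ η₂ z = η₂ y), f₂ z θ) π₂)
    (hden : ∫ θ, f₂ y θ ∂π₂ ≠ 0)
    (hdenη : ∫ θ, (∑ z ∈ univ.filter (fun z : 𝒳 => η₁ z = η₁ y ∧ η₂ z = η₂ y), f₂ z θ)
      ∂π₂ ≠ 0) :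
    (∫ θ, f₁ y θ ∂π₁) / (∫ θ, f₂ y θ ∂π₂)
      = (∫ θ, (∑ z ∈ univ.filter (fun z : 𝒳 => η₁ z = η₁ y ∧ η₂ z = η₂ y), f₁ z θ) ∂π₁) /
        (∫ θ, (∑ z ∈ univ.filter (fun z : 𝒳 => η₁ z = η₁ y ∧ η₂ z = η₂ y), f₂ z θ) ∂π₂) := by
  set S := univ.filter (fun z : 𝒳 => η₁ z = η₁ y ∧ η₂ z = η₂ y) with hS
  have hsum₁ : ∀ θ, ∑ z ∈ S, f₁ z θ = (S.card : ℝ) * f₁ y θ := by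
    intro θ
    have h : ∀ z ∈ S, f₁ z θ = f₁ y θ := by
      intro z hz
      simp only [hS, Finset.mem_filter] at hz
      rw [hf₁, hf₁, hz.2.1]
    rw [Finset.sum_congr rfl h, Finset.sum_const, nsmul_eq_mul]
  have hsum₂ : ∀ θ, ∑ z ∈ S, f₂ z θ = (S.card : ℝ) * f₂ y θ := by
    intro θ
    have h : ∀ z ∈ S, f₂ z θ = f₂ y θ := by
      intro z hz
      simp only [hS, Finset.mem_filter] at hz
      rw [hf₂, hf₂, hz.2.2]
    rw [Finset.sum_congr rfl h, Finset.sum_const, nsmul_eq_mul]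
  have hy : y ∈ S := by simp [hS]
  have hcard : (S.card : ℝ) ≠ 0 := by
    exact_mod_cast Finset.card_ne_zero_of_mem hy
  have h₁ : ∫ θ, (∑ z ∈ S, f₁ z θ) ∂π₁ = (S.card : ℝ) * ∫ θ, f₁ y θ ∂π₁ := by
    simp_rw [hsum₁]; exact integral_const_mul _ _
  have h₂ : ∫ θ, (∑ z ∈ S, f₂ z θ) ∂π₂ = (S.card : ℝ) * ∫ θ, f₂ y θ ∂π₂ := by
    simp_rw [hsum₂]; exact integral_const_mul _ _
  rw [h₁, h₂, mul_div_mul_left _ _ hcard]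
end

section
/- Let θ_0 > 0 and let (S_n)_{n≥1} be a sequence of natural numbers with S_n/n → θ_0. Then (1 + 1/n)^{-S_n} · (S_n + n)(S_n + n + 1) / (n(n+1)) → e^{-θ_0} (θ_0 + 1)^2 as n → ∞. In particular the limit is a finite, strictly positive constant. -/
open Filter

/-- If `Sₙ/n → θ₀ > 0`, then the closed-form Bayes factor
`(1 + 1/n)^{-Sₙ} (Sₙ+n)(Sₙ+n+1)/(n(n+1))` converges to `e^{-θ₀}(θ₀+1)²`, a finite strictly
positive constant. -/
theorem bayes_factor_limit_of_slln
    (θ₀ : ℝ) (hθ₀ : 0 < θ₀) (S : ℕ → ℕ)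
    (hS : Tendsto (fun n : ℕ => (S n : ℝ) / n) atTop (nhds θ₀)) :
    Tendsto
      (fun n : ℕ =>
        ((1 + 1 / (n : ℝ)) ^ (S n))⁻¹ *
          (((S n : ℝ) + n) * ((S n : ℝ) + n + 1)) / ((n : ℝ) * ((n : ℝ) + 1)))
      atTop (nhds (Real.exp (-θ₀) * (θ₀ + 1) ^ 2)) ∧
    0 < Real.exp (-θ₀) * (θ₀ + 1) ^ 2 := by
  constructor
  · -- n * log(1 + 1/n) → 1
    have h1 : Tendsto (fun n : ℕ => (n : ℝ) * Real.log (1 + 1 / n)) atTop (nhds 1) :=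
      (Real.tendsto_mul_log_one_add_div_atTop 1).comp tendsto_natCast_atTop_atTop
    -- S n * log(1 + 1/n) → θ₀
    have h2 : Tendsto (fun n : ℕ => (S n : ℝ) * Real.log (1 + 1 / n)) atTop (nhds θ₀) := by
      have := hS.mul h1
      rw [mul_one] at this
      refine this.congr' ?_
      filter_upwards [eventually_ne_atTop 0] with n hn
      have : (n : ℝ) ≠ 0 := Nat.cast_ne_zero.mpr hn
      field_simp
    have h3 : Tendsto (fun n : ℕ => ((1 + 1 / (n : ℝ)) ^ (S n))⁻¹) atTop
        (nhds (Real.exp (-θ₀))) := by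
      have := (Real.continuous_exp.tendsto _).comp h2.neg
      refine this.congr' ?_
      filter_upwards [eventually_gt_atTop 0] with n hn
      have hpos : (0 : ℝ) < 1 + 1 / n := by positivity
      simp only [Function.comp_apply]
      rw [Real.exp_neg, Real.exp_nat_mul, Real.exp_log hpos]
    -- S n / (n+1) → θ₀
    have h4 : Tendsto (fun n : ℕ => (S n : ℝ) / (n + 1)) atTop (nhds θ₀) := by
      have hn1 : Tendsto (fun n : ℕ => (n : ℝ) / (n + 1)) atTop (nhds 1) :=
        tendsto_natCast_div_add_atTop (1 : ℝ)
      have := hS.mul hn1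
      rw [mul_one] at this
      refine this.congr' ?_
      filter_upwards [eventually_ne_atTop 0] with n hn
      have : (n : ℝ) ≠ 0 := Nat.cast_ne_zero.mpr hn
      field_simp
    have h5 : Tendsto (fun n : ℕ => ((S n : ℝ) / n + 1) * ((S n : ℝ) / (n + 1) + 1)) atTop
        (nhds ((θ₀ + 1) * (θ₀ + 1))) :=
      (hS.add_const 1).mul (h4.add_const 1)
    have := h3.mul h5
    have heq : Real.exp (-θ₀) * ((θ₀ + 1) * (θ₀ + 1)) = Real.exp (-θ₀) * (θ₀ + 1) ^ 2 := by ring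
    rw [heq] at this
    refine this.congr' ?_
    filter_upwards [eventually_gt_atTop 0] with n hn
    have hn0 : (n : ℝ) ≠ 0 := Nat.cast_ne_zero.mpr hn.ne'
    have hn1 : (n : ℝ) + 1 ≠ 0 := by positivity
    field_simp
    ring
  · positivity
end

section
/- (Theorem 1, with the marginal likelihood of S corrected.) Consider model selection between model 1: y_i i.i.d. Poisson(λ) with prior λ ~ Exponential(1), and model 2: y_i i.i.d. geometric 𝒢(p) with prior p ~ Uniform(0,1), when the observed data consist of i.i.d. integrable ℕ-valued random variables y_1, y_2, … with E[y_i] = θ_0 > 0. Let S_n = Σ_{i=1}^n y_i and let B_{12}^η(S_n) = (∫_0^∞ e^{-nλ}(nλ)^{S_n}/S_n! · e^{-λ} dλ) / (∫_0^1 C(n+S_n−1,S_n) p^{S_n}(1−p)^n dp) be the Bayes factor based on the sufficient statistic S_n. Then, almost surely, lim_{n→∞} B_{12}^η(S_n) = e^{-θ_0} (θ_0 + 1)^2. -/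
open MeasureTheory Filter ProbabilityTheory intervalIntegral

lemma prod_fact (S n : ℕ) :
    S.factorial * ∏ j ∈ Finset.range (n+1), (S + 1 + j) = (S + n + 1).factorial := by
  induction n with
  | zero => simp [Nat.factorial_succ, Nat.mul_comm]
  | succ n ih =>
      rw [Finset.prod_range_succ, ← mul_assoc, ih,
        show S + (n+1) + 1 = (S + n + 1) + 1 by ring, Nat.factorial_succ, mul_comm]
      congr 1
      omega

lemma beta_nat (S n : ℕ) :
    ∫ p in (0:ℝ)..1, p ^ S * (1 - p) ^ n
      = (S.factorial * n.factorial : ℝ) / ((S + n + 1).factorial) := by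
  have hu : 0 < Complex.re ((S:ℂ)+1) := by
    simp only [Complex.add_re, Complex.natCast_re, Complex.one_re]
    positivity
  have h := Complex.betaIntegral_eval_nat_add_one_right hu n
  have hfac : (S.factorial : ℂ) ≠ 0 := by exact_mod_cast S.factorial_pos.ne'
  have hprod : ∏ j ∈ Finset.range (n+1), ((S:ℂ) + 1 + j)
      = ((S+n+1).factorial : ℂ) / (S.factorial : ℂ) := by
    rw [eq_div_iff hfac, mul_comm]
    have := congrArg (Nat.cast : ℕ → ℂ) (prod_fact S n)
    push_cast at this
    exact this
  rw [hprod] at h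
  have hlhs : Complex.betaIntegral ((S:ℂ)+1) ((n:ℂ)+1)
      = ((∫ p in (0:ℝ)..1, p ^ S * (1 - p) ^ n : ℝ) : ℂ) := by
    rw [Complex.betaIntegral, ← intervalIntegral.integral_ofReal]
    congr 1
    funext x
    rw [add_sub_cancel_right, add_sub_cancel_right, Complex.cpow_natCast,
      Complex.cpow_natCast]
    push_cast
    ring
  rw [hlhs] at h
  have : ((∫ p in (0:ℝ)..1, p ^ S * (1 - p) ^ n : ℝ) : ℂ)
      = ((S.factorial * n.factorial : ℝ) / ((S + n + 1).factorial) : ℝ) := by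
    rw [h]
    push_cast
    rw [div_div_eq_mul_div]
    ring_nf
  exact_mod_cast this

lemma numer_eval (n S : ℕ) :
    (∫ lam in Set.Ioi (0:ℝ),
        Real.exp (-(n * lam)) * (n * lam) ^ S / (Nat.factorial S : ℝ) * Real.exp (-lam))
      = (n:ℝ)^S / ((n:ℝ)+1)^(S+1) := by
  have hfac : (0:ℝ) < (Nat.factorial S : ℝ) := by exact_mod_cast S.factorial_pos
  have key := Real.integral_rpow_mul_exp_neg_mul_Ioi (a := (S:ℝ)+1) (by positivity)
    (r := (n:ℝ)+1) (by positivity)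
  rw [show ((S:ℝ)+1) = ((S+1 : ℕ):ℝ) by push_cast; ring] at key
  rw [Real.rpow_natCast] at key
  rw [show (((S+1:ℕ)):ℝ) = (S:ℝ)+1 by push_cast; ring] at key
  rw [add_sub_cancel_right] at key
  simp only [Real.rpow_natCast] at key
  rw [Real.Gamma_nat_eq_factorial] at key
  have step : (∫ lam in Set.Ioi (0:ℝ),
        Real.exp (-(n * lam)) * (n * lam) ^ S / (Nat.factorial S : ℝ) * Real.exp (-lam))
      = ((n:ℝ)^S / (Nat.factorial S : ℝ)) *
        ∫ lam in Set.Ioi (0:ℝ), lam ^ S * Real.exp (-(((n:ℝ)+1) * lam)) := by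
    rw [← MeasureTheory.integral_const_mul]
    congr 1
    funext lam
    have e : Real.exp (-((n:ℝ) * lam)) * Real.exp (-lam) = Real.exp (-(((n:ℝ)+1) * lam)) := by
      rw [← Real.exp_add]; congr 1; ring
    calc Real.exp (-(n * lam)) * (n * lam) ^ S / (Nat.factorial S : ℝ) * Real.exp (-lam)
        = ((n:ℝ)^S / (Nat.factorial S : ℝ)) *
            (lam ^ S * (Real.exp (-((n:ℝ) * lam)) * Real.exp (-lam))) := by
          rw [mul_pow]; ring
      _ = _ := by rw [e]
  rw [step, key]
  field_simp
  rw [one_div, inv_pow, mul_assoc, inv_mul_cancel₀ (by positivity), mul_one]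

lemma denom_eval (n S : ℕ) (hn : 1 ≤ n) :
    (∫ p in (0:ℝ)..1,
        (Nat.choose (n + S - 1) S : ℝ) * p ^ S * (1 - p) ^ n)
      = (n:ℝ) / (((n:ℝ) + S) * ((n:ℝ) + S + 1)) := by
  obtain ⟨k, rfl⟩ : ∃ k, n = k + 1 := ⟨n - 1, by omega⟩
  simp_rw [mul_assoc]
  rw [intervalIntegral.integral_const_mul, beta_nat]
  have hidx : k + 1 + S - 1 = k + S := by omega
  rw [hidx]
  have hS : (Nat.factorial S : ℝ) ≠ 0 := by exact_mod_cast S.factorial_pos.ne'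
  have hk : (Nat.factorial k : ℝ) ≠ 0 := by exact_mod_cast k.factorial_pos.ne'
  have hSk : (Nat.factorial (S+k) : ℝ) ≠ 0 := by exact_mod_cast (S+k).factorial_pos.ne'
  have h1 : ((k+S).choose S : ℝ) = ((k+S).factorial : ℝ) / (S.factorial * k.factorial) := by
    rw [eq_div_iff (by positivity)]
    have := Nat.choose_mul_factorial_mul_factorial (Nat.le_add_left S k)
    rw [Nat.add_sub_cancel] at this
    exact_mod_cast by rw [← mul_assoc]; exact_mod_cast congrArg (Nat.cast : ℕ → ℝ) this
  have h2 : ((S + (k+1) + 1).factorial : ℝ)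
      = (((S:ℝ)+k+2)) * ((((S:ℝ)+k+1)) * ((S+k).factorial : ℝ)) := by
    rw [show S + (k+1) + 1 = ((S+k) + 1) + 1 by ring, Nat.factorial_succ, Nat.factorial_succ]
    push_cast
    ring
  have h3 : ((k+1).factorial : ℝ) = ((k:ℝ)+1) * (k.factorial : ℝ) := by
    rw [Nat.factorial_succ]; push_cast; ring
  have h4 : ((k+S).factorial : ℝ) = ((S+k).factorial : ℝ) := by rw [Nat.add_comm]
  rw [h1, h2, h3, h4]
  have p1 : ((k:ℝ)+1) + S > 0 := by positivity
  have p2 : ((k:ℝ)+1) + S + 1 > 0 := by positivity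
  field_simp
  push_cast
  ring

/-- Theorem 1 (with the marginal likelihood of S corrected): for i.i.d. integrable ℕ-valued
data with mean `θ₀ > 0`, the Bayes factor based on the sufficient statistic `Sₙ = Σᵢ yᵢ`,
between the Poisson model with Exponential(1) prior and the geometric model with
Uniform(0,1) prior, converges almost surely to `e^{-θ₀}(θ₀+1)²`. -/
theorem bayes_factor_sufficient_statistic_limit
    {Ω : Type*} [MeasurableSpace Ω] (P : Measure Ω) [IsProbabilityMeasure P]
    (y : ℕ → Ω → ℕ)
    (hmeas : ∀ i, Measurable (y i))
    (hindep : iIndepFun y P)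
    (hident : ∀ i, IdentDistrib (y i) (y 0) P P)
    (hint : Integrable (fun ω => (y 0 ω : ℝ)) P)
    (θ₀ : ℝ) (hθ₀ : 0 < θ₀) (hmean : ∫ ω, (y 0 ω : ℝ) ∂P = θ₀) :
    ∀ᵐ ω ∂P,
      Tendsto
        (fun n : ℕ =>
          (∫ lam in Set.Ioi (0 : ℝ),
              Real.exp (-(n * lam)) * (n * lam) ^ (∑ i ∈ Finset.range n, y i ω) /
                (Nat.factorial (∑ i ∈ Finset.range n, y i ω) : ℝ) * Real.exp (-lam)) /
          (∫ p in (0 : ℝ)..1,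
              (Nat.choose (n + (∑ i ∈ Finset.range n, y i ω) - 1)
                  (∑ i ∈ Finset.range n, y i ω) : ℝ) *
                p ^ (∑ i ∈ Finset.range n, y i ω) * (1 - p) ^ n))
        atTop (nhds (Real.exp (-θ₀) * (θ₀ + 1) ^ 2)) := by
  have hcast : Measurable (Nat.cast : ℕ → ℝ) := measurable_from_top
  have slln := strong_law_ae_real (fun i ω => (y i ω : ℝ))
    hint
    (fun i j hij => ((hindep.indepFun hij).comp hcast hcast))
    (fun i => (hident i).comp hcast)
  rw [hmean] at slln
  filter_upwards [slln] with ω hω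
  set s : ℕ → ℕ := fun n => ∑ i ∈ Finset.range n, y i ω with hsdef
  have hs : Tendsto (fun n : ℕ => ((s n : ℝ)) / n) atTop (nhds θ₀) := by
    refine hω.congr fun n => ?_
    rw [hsdef]
    push_cast
    rfl
  -- the limit of the explicit reparametrized sequence
  have hM : Tendsto (fun n : ℕ => (n:ℝ) * Real.log (1 + 1/(n:ℝ))) atTop (nhds 1) :=
    (Real.tendsto_mul_log_one_add_div_atTop 1).comp tendsto_natCast_atTop_atTop
  have hN : Tendsto (fun n : ℕ => 1/((n:ℝ)+1)) atTop (nhds 0) :=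
    tendsto_one_div_add_atTop_nhds_zero_nat
  have hinv : Tendsto (fun n : ℕ => 1/(n:ℝ)) atTop (nhds 0) := by
    exact tendsto_one_div_atTop_nhds_zero_nat
  have hP : Tendsto (fun n : ℕ => (n:ℝ)/((n:ℝ)+1)) atTop (nhds 1) := by
    have heq : (fun n : ℕ => (n:ℝ)/((n:ℝ)+1)) = fun n : ℕ => 1 - 1/((n:ℝ)+1) := by
      funext n
      have : ((n:ℝ)+1) ≠ 0 := by positivity
      field_simp
      ring
    rw [heq]
    simpa using tendsto_const_nhds.sub hN
  have hexp : Tendsto (fun n : ℕ =>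
      Real.exp (-((s n : ℝ)/n) * ((n:ℝ) * Real.log (1 + 1/(n:ℝ))))) atTop
      (nhds (Real.exp (-θ₀ * 1))) :=
    (Real.continuous_exp.tendsto _).comp (hs.neg.mul hM)
  have hrest : Tendsto (fun n : ℕ =>
      (1 + (s n : ℝ)/n) * ((1 + (s n : ℝ)/n + 1/(n:ℝ)) * ((n:ℝ)/((n:ℝ)+1)))) atTop
      (nhds ((1 + θ₀) * ((1 + θ₀ + 0) * 1))) :=
    (tendsto_const_nhds.add hs).mul (((tendsto_const_nhds.add hs).add hinv).mul hP)
  have hG : Tendsto (fun n : ℕ =>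
      Real.exp (-((s n : ℝ)/n) * ((n:ℝ) * Real.log (1 + 1/(n:ℝ)))) *
        ((1 + (s n : ℝ)/n) * ((1 + (s n : ℝ)/n + 1/(n:ℝ)) * ((n:ℝ)/((n:ℝ)+1)))))
      atTop (nhds (Real.exp (-θ₀) * (θ₀ + 1) ^ 2)) := by
    have := hexp.mul hrest
    convert this using 2
    ring_nf
  refine hG.congr' ?_
  filter_upwards [eventually_ge_atTop 1] with n hn
  have hn0 : (0:ℝ) < (n:ℝ) := by exact_mod_cast hn
  have hn1 : (0:ℝ) < (n:ℝ) + 1 := by positivity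
  set S : ℕ := s n with hS
  -- evaluate the two integrals
  rw [numer_eval n S, denom_eval n S hn]
  -- rewrite the exponential factor as a power
  have e1 : (1:ℝ) + 1/(n:ℝ) = ((n:ℝ)+1)/(n:ℝ) := by field_simp
  have e2 : Real.log (((n:ℝ)+1)/(n:ℝ)) = - Real.log ((n:ℝ)/((n:ℝ)+1)) := by
    rw [← Real.log_inv, inv_div]
  have e3 : -((S:ℝ)/(n:ℝ)) * ((n:ℝ) * Real.log (1 + 1/(n:ℝ)))
      = Real.log ((n:ℝ)/((n:ℝ)+1)) * (S:ℝ) := by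
    rw [e1, e2]
    field_simp
  have e4 : Real.exp (Real.log ((n:ℝ)/((n:ℝ)+1)) * (S:ℝ)) = ((n:ℝ)/((n:ℝ)+1)) ^ S := by
    rw [← Real.rpow_natCast ((n:ℝ)/((n:ℝ)+1)) S, Real.rpow_def_of_pos (by positivity)]
  rw [e3, e4]
  have hq : ((n:ℝ)/((n:ℝ)+1)) ^ S = (n:ℝ)^S / ((n:ℝ)+1)^S := div_pow _ _ _
  rw [hq]
  have hpow : ((n:ℝ)+1) ^ (S+1) = ((n:ℝ)+1)^S * ((n:ℝ)+1) := pow_succ _ _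
  rw [hpow]
  have hnS : (0:ℝ) < (n:ℝ) + S := by positivity
  have hnS1 : (0:ℝ) < (n:ℝ) + S + 1 := by positivity
  have hp1 : ((n:ℝ)+1)^S ≠ 0 := by positivity
  field_simp
end

section
/- Under the assumptions of Theorem 1 (y_1, y_2, … i.i.d. integrable ℕ-valued with mean θ_0 > 0, S_n = Σ_{i=1}^n y_i, and B_{12}^η(S_n) the Bayes factor based on S_n between the Poisson/Exponential(1) model and the geometric/Uniform(0,1) model), the Bayes factor based on the sufficient statistic is not consistent: almost surely, B_{12}^η(S_n) converges to a finite strictly positive constant, so it neither tends to ∞ nor to 0; in particular, it does not tend to ∞ when the data are i.i.d. Poisson and does not tend to 0 when the data are i.i.d. geometric. -/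
open MeasureTheory Filter ProbabilityTheory intervalIntegral

lemma num_eval (n S : ℕ) :
    (∫ lam in Set.Ioi (0:ℝ),
        Real.exp (-(n * lam)) * (n * lam) ^ S / (Nat.factorial S : ℝ) * Real.exp (-lam))
      = (n:ℝ) ^ S / ((n:ℝ)+1) ^ (S+1) := by
  have hS : (0:ℝ) < S + 1 := by positivity
  have hr : (0:ℝ) < (n:ℝ) + 1 := by positivity
  have key := Real.integral_rpow_mul_exp_neg_mul_Ioi (a := (S:ℝ)+1) (r := (n:ℝ)+1) hS hr
  have hcongr : ∀ lam ∈ Set.Ioi (0:ℝ),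
      Real.exp (-(n * lam)) * (n * lam) ^ S / (Nat.factorial S : ℝ) * Real.exp (-lam)
        = ((n:ℝ)^S / (Nat.factorial S : ℝ)) * (lam ^ (((S:ℝ)+1)-1) * Real.exp (-(((n:ℝ)+1) * lam))) := by
    intro lam _
    have h1 : lam ^ (((S:ℝ)+1)-1) = lam ^ S := by
      rw [add_sub_cancel_right, Real.rpow_natCast]
    have h2 : Real.exp (-(((n:ℝ)+1)*lam)) = Real.exp (-(n*lam)) * Real.exp (-lam) := by
      rw [← Real.exp_add]; congr 1; ring
    rw [h1, h2, mul_pow]; ring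
  have hg : Real.Gamma ((S:ℝ)+1) = Nat.factorial S := by
    have := Real.Gamma_nat_eq_factorial S
    push_cast at this ⊢
    convert this using 2
  rw [show (1/((n:ℝ)+1)) ^ ((S:ℝ)+1) = (1/((n:ℝ)+1)) ^ (S+1 : ℕ) by
    rw [← Real.rpow_natCast]; push_cast; ring_nf] at key
  rw [MeasureTheory.setIntegral_congr_fun measurableSet_Ioi hcongr,
    MeasureTheory.integral_const_mul, key, hg]
  have hf : (Nat.factorial S : ℝ) ≠ 0 := by positivity
  field_simp
  rw [mul_assoc, ← mul_pow, one_div, inv_mul_cancel₀ (ne_of_gt hr), one_pow, mul_one]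

lemma beta_eval (n S : ℕ) :
    (∫ p in (0:ℝ)..1, p ^ S * (1-p) ^ n)
      = (Nat.factorial S * Nat.factorial n : ℝ) / (Nat.factorial (S+n+1) : ℝ) := by
  have hu : 0 < Complex.re ((S:ℂ)+1) := by
    simp only [Complex.add_re, Complex.natCast_re, Complex.one_re]; positivity
  have key := Complex.betaIntegral_eval_nat_add_one_right hu n
  have hprod : (Nat.factorial S : ℂ) * ∏ j ∈ Finset.range (n+1), ((S:ℂ)+1+j)
      = (Nat.factorial (S+n+1) : ℂ) := by
    have hne : ∀ m : ℕ, (Nat.factorial S : ℂ) * ∏ j ∈ Finset.range (m+1), ((S:ℂ)+1+j)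
        = (Nat.factorial (S+m+1) : ℂ) := by
      intro m
      induction m with
      | zero => simp [Nat.factorial_succ]; push_cast; ring
      | succ k ih =>
          rw [Finset.prod_range_succ, ← mul_assoc, ih,
            show S+(k+1)+1 = (S+k+1)+1 by omega, Nat.factorial_succ (S+k+1)]
          push_cast; ring
    exact hne n
  -- relate real integral with the complex beta integral
  have hbeta : Complex.betaIntegral ((S:ℂ)+1) ((n:ℂ)+1)
      = ((∫ p in (0:ℝ)..1, p ^ S * (1-p) ^ n : ℝ) : ℂ) := by
    rw [Complex.betaIntegral, ← intervalIntegral.integral_ofReal]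
    apply intervalIntegral.integral_congr
    intro x _
    push_cast
    rw [add_sub_cancel_right, add_sub_cancel_right, Complex.cpow_natCast, Complex.cpow_natCast]
  rw [hbeta] at key
  have : ((∫ p in (0:ℝ)..1, p ^ S * (1-p) ^ n : ℝ) : ℂ)
      = ((Nat.factorial S * Nat.factorial n : ℝ) / (Nat.factorial (S+n+1) : ℝ) : ℝ) := by
    rw [key]
    have hSne : (Nat.factorial S : ℂ) ≠ 0 := by
      exact_mod_cast Nat.factorial_ne_zero S
    have hfne : (Nat.factorial (S+n+1) : ℂ) ≠ 0 := by
      exact_mod_cast Nat.factorial_ne_zero (S+n+1)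
    have hpne : (∏ j ∈ Finset.range (n+1), ((S:ℂ)+1+j)) ≠ 0 := by
      intro h
      rw [h, mul_zero] at hprod
      exact hfne hprod.symm
    push_cast
    rw [eq_div_iff hfne, div_mul_eq_mul_div, div_eq_iff hpne, ← hprod]
    ring
  exact_mod_cast this

lemma den_simp (n S : ℕ) (hn : 1 ≤ n) :
    ((n + S - 1).choose S : ℝ) *
      ((Nat.factorial S * Nat.factorial n : ℝ) / (Nat.factorial (S+n+1) : ℝ))
      = (n : ℝ) / (((n:ℝ) + S) * ((n:ℝ) + S + 1)) := by
  obtain ⟨m, rfl⟩ : ∃ m, n = m + 1 := ⟨n - 1, by omega⟩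
  have h1 : (m + S).choose S * Nat.factorial S * Nat.factorial m
      = Nat.factorial (m + S) := by
    have := Nat.choose_mul_factorial_mul_factorial (Nat.le_add_left S m)
    simpa using this
  have h2 : Nat.factorial (S + (m+1) + 1) = (S+m+2) * ((S+m+1) * Nat.factorial (S+m)) := by
    rw [show S+(m+1)+1 = (S+m+1)+1 by omega, Nat.factorial_succ (S+m+1),
      Nat.factorial_succ (S+m)]
  have h3 : Nat.factorial (m+1) = (m+1) * Nat.factorial m := Nat.factorial_succ m
  have hc : (m+1) + S - 1 = m + S := by omega
  rw [hc]
  have h1' : ((m + S).choose S : ℝ) * Nat.factorial S * Nat.factorial m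
      = Nat.factorial (m + S) := by exact_mod_cast congrArg (Nat.cast : ℕ → ℝ) h1
  have hfm : (Nat.factorial m : ℝ) ≠ 0 := by positivity
  have hfSm : (Nat.factorial (S+m) : ℝ) ≠ 0 := by positivity
  have hd1 : ((m:ℝ)+1) + S ≠ 0 := by positivity
  have hd2 : ((m:ℝ)+1) + S + 1 ≠ 0 := by positivity
  have h2' : (Nat.factorial (S + (m+1) + 1) : ℝ)
      = ((S:ℝ)+m+2) * (((S:ℝ)+m+1) * Nat.factorial (S+m)) := by
    rw [h2]; push_cast; ring
  have h3' : (Nat.factorial (m+1) : ℝ) = ((m:ℝ)+1) * Nat.factorial m := by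
    rw [h3]; push_cast; ring
  rw [h2', h3']
  have hms : (Nat.factorial (m+S) : ℝ) = Nat.factorial (S+m) := by rw [Nat.add_comm m S]
  rw [hms] at h1'
  push_cast
  field_simp
  linear_combination (((m:ℝ)+1+(S:ℝ))*((m:ℝ)+1+(S:ℝ)+1)) * h1'

lemma tendsto_form (s : ℕ → ℕ) (θ₀ : ℝ)
    (h : Tendsto (fun n => (s n : ℝ) / n) atTop (nhds θ₀)) :
    Tendsto (fun n : ℕ => ((n:ℝ)/((n:ℝ)+1)) ^ (s n) *
        (((n:ℝ) + s n) * ((n:ℝ) + s n + 1) / ((n:ℝ) * ((n:ℝ)+1))))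
      atTop (nhds (Real.exp (-θ₀) * ((1+θ₀) * (1+θ₀)))) := by
  have hlog : Tendsto (fun n : ℕ => (n:ℝ) * Real.log (1 + 1/(n:ℝ))) atTop (nhds 1) :=
    (Real.tendsto_mul_log_one_add_div_atTop 1).comp tendsto_natCast_atTop_atTop
  have hA : Tendsto (fun n : ℕ => ((n:ℝ)/((n:ℝ)+1)) ^ (s n)) atTop (nhds (Real.exp (-θ₀))) := by
    have h1 : Tendsto (fun n : ℕ => -(((s n : ℝ)/n) * ((n:ℝ) * Real.log (1 + 1/(n:ℝ)))))
        atTop (nhds (-(θ₀ * 1))) := (h.mul hlog).neg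
    rw [mul_one] at h1
    have h2 := (Real.continuous_exp.tendsto _).comp h1
    apply h2.congr'
    filter_upwards [eventually_ge_atTop 1] with n hn
    have hn0 : (0:ℝ) < (n:ℝ) := by exact_mod_cast hn
    have hpos : (0:ℝ) < (n:ℝ)/((n:ℝ)+1) := by positivity
    have hlogeq : Real.log ((n:ℝ)/((n:ℝ)+1)) = - Real.log (1 + 1/(n:ℝ)) := by
      rw [← Real.log_inv, show (1 + 1/(n:ℝ)) = (((n:ℝ)+1)/(n:ℝ)) by field_simp]
      congr 1
      field_simp
    have : ((n:ℝ)/((n:ℝ)+1)) ^ (s n) = Real.exp ((s n : ℝ) * Real.log ((n:ℝ)/((n:ℝ)+1))) := by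
      rw [← Real.exp_log hpos, ← Real.exp_nat_mul, Real.exp_log hpos]
    simp only [Function.comp]
    rw [this, hlogeq]
    congr 1
    field_simp
  have hsn : Tendsto (fun n : ℕ => ((n:ℝ) + s n)/n) atTop (nhds (1+θ₀)) := by
    have := (tendsto_const_nhds (x := (1:ℝ)) (f := atTop)).add h
    apply this.congr'
    filter_upwards [eventually_ge_atTop 1] with n hn
    have hn0 : ((n:ℝ)) ≠ 0 := by positivity
    field_simp
  have hinv : Tendsto (fun n : ℕ => 1/(n:ℝ)) atTop (nhds 0) := by
    exact tendsto_one_div_atTop_nhds_zero_nat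
  have hnn1 : Tendsto (fun n : ℕ => (n:ℝ)/((n:ℝ)+1)) atTop (nhds 1) :=
    tendsto_natCast_div_add_atTop (1:ℝ)
  have hsn1 : Tendsto (fun n : ℕ => ((n:ℝ) + s n + 1)/((n:ℝ)+1)) atTop (nhds (1+θ₀)) := by
    have h4 : Tendsto (fun n : ℕ => ((n:ℝ)/((n:ℝ)+1)) * (((n:ℝ) + s n)/n + 1/n))
        atTop (nhds (1 * ((1+θ₀) + 0))) := hnn1.mul (hsn.add hinv)
    rw [one_mul, add_zero] at h4
    apply h4.congr'
    filter_upwards [eventually_ge_atTop 1] with n hn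
    have hn0 : ((n:ℝ)) ≠ 0 := by positivity
    have hn1 : ((n:ℝ)+1) ≠ 0 := by positivity
    field_simp
  have hfinal := hA.mul (hsn.mul hsn1)
  apply hfinal.congr'
  filter_upwards [eventually_ge_atTop 1] with n hn
  have hn0 : ((n:ℝ)) ≠ 0 := by
    have : (1:ℝ) ≤ (n:ℝ) := by exact_mod_cast hn
    positivity
  have hn1 : ((n:ℝ)+1) ≠ 0 := by positivity
  rw [mul_comm ((n:ℝ)+(s n):ℝ) _]
  congr 1
  field_simp

/-- Under the assumptions of Theorem 1 the Bayes factor based on the sufficient statistic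
is not consistent: almost surely it converges to a finite strictly positive constant, so it
neither tends to `∞` nor to `0`. -/
theorem bayes_factor_sufficient_statistic_inconsistent
    {Ω : Type*} [MeasurableSpace Ω] (P : Measure Ω) [IsProbabilityMeasure P]
    (y : ℕ → Ω → ℕ)
    (hmeas : ∀ i, Measurable (y i))
    (hindep : iIndepFun y P)
    (hident : ∀ i, IdentDistrib (y i) (y 0) P P)
    (hint : Integrable (fun ω => (y 0 ω : ℝ)) P)
    (θ₀ : ℝ) (hθ₀ : 0 < θ₀) (hmean : ∫ ω, (y 0 ω : ℝ) ∂P = θ₀)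
    (B : ℕ → Ω → ℝ)
    (hB : ∀ n ω, B n ω =
      (∫ lam in Set.Ioi (0 : ℝ),
          Real.exp (-(n * lam)) * (n * lam) ^ (∑ i ∈ Finset.range n, y i ω) /
            (Nat.factorial (∑ i ∈ Finset.range n, y i ω) : ℝ) * Real.exp (-lam)) /
      (∫ p in (0 : ℝ)..1,
          (Nat.choose (n + (∑ i ∈ Finset.range n, y i ω) - 1)
              (∑ i ∈ Finset.range n, y i ω) : ℝ) *
            p ^ (∑ i ∈ Finset.range n, y i ω) * (1 - p) ^ n)) :
    ∀ᵐ ω ∂P,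
      ∃ c : ℝ, 0 < c ∧
        Tendsto (fun n => B n ω) atTop (nhds c) ∧
        ¬ Tendsto (fun n => B n ω) atTop atTop ∧
        ¬ Tendsto (fun n => B n ω) atTop (nhds 0) := by
  have hpair : Pairwise (Function.onFun (IndepFun · · P) fun i ω => (y i ω : ℝ)) := by
    intro i j hij
    exact (hindep.indepFun hij).comp measurable_from_top measurable_from_top
  have hid : ∀ i, IdentDistrib (fun ω => (y i ω : ℝ)) (fun ω => (y 0 ω : ℝ)) P P :=
    fun i => (hident i).comp measurable_from_top
  have hslln := strong_law_ae_real (fun i ω => (y i ω : ℝ)) hint hpair hid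
  rw [hmean] at hslln
  filter_upwards [hslln] with ω hω
  set s : ℕ → ℕ := fun n => ∑ i ∈ Finset.range n, y i ω with hsdef
  have hs : Tendsto (fun n => (s n : ℝ) / n) atTop (nhds θ₀) := by
    apply hω.congr
    intro n
    simp [hsdef, Nat.cast_sum]
  set c : ℝ := Real.exp (-θ₀) * ((1+θ₀) * (1+θ₀)) with hcdef
  have hc : 0 < c := by positivity
  have hT : Tendsto (fun n => B n ω) atTop (nhds c) := by
    apply (tendsto_form s θ₀ hs).congr'
    filter_upwards [eventually_ge_atTop 1] with n hn
    have hn0 : (0:ℝ) < (n:ℝ) := by exact_mod_cast hn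
    have hden : (∫ p in (0 : ℝ)..1,
        ((n + s n - 1).choose (s n) : ℝ) * p ^ (s n) * (1 - p) ^ n)
        = (n : ℝ) / (((n:ℝ) + s n) * ((n:ℝ) + s n + 1)) := by
      have : ∀ p : ℝ, ((n + s n - 1).choose (s n) : ℝ) * p ^ (s n) * (1 - p) ^ n
          = ((n + s n - 1).choose (s n) : ℝ) * (p ^ (s n) * (1 - p) ^ n) := by
        intro p; ring
      simp_rw [this]
      rw [intervalIntegral.integral_const_mul, beta_eval n (s n), den_simp n (s n) hn]
    rw [hB n ω, show (∑ i ∈ Finset.range n, y i ω) = s n from rfl]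
    rw [num_eval n (s n), hden]
    have h1 : ((n:ℝ)+1) ≠ 0 := by positivity
    have h2 : ((n:ℝ) + s n) ≠ 0 := by positivity
    have h3 : ((n:ℝ) + s n + 1) ≠ 0 := by positivity
    have hn0' : ((n:ℝ)) ≠ 0 := ne_of_gt hn0
    have hp : ((n:ℝ)+1) ^ (s n) ≠ 0 := pow_ne_zero _ h1
    rw [div_pow, pow_succ]
    field_simp
  refine ⟨c, hc, hT, not_tendsto_atTop_of_tendsto_nhds hT, fun h0 => ?_⟩
  have := tendsto_nhds_unique hT h0
  linarith
end

section
/- (Theorem 2.) Consider model selection between model 1: y_i i.i.d. 𝒩(μ, σ_1²) and model 2: y_i i.i.d. 𝒩(μ, σ_2²), with σ_1, σ_2 > 0 given and common prior μ ~ 𝒩(0, a²), a > 0, when the observed data y_1, y_2, … are i.i.d. real random variables with finite mean (and variance). Let ȳ_n = (1/n)Σ_{i=1}^n y_i and let B_{12}^η(n, ȳ_n) = √((a² + σ_2²/n)/(a² + σ_1²/n)) · exp((ȳ_n²/2)(1/(a² + σ_2²/n) − 1/(a² + σ_1²/n))) be the Bayes factor based on the sufficient statistic ȳ_n. Then, almost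 surely, lim_{n→∞} B_{12}^η(n, ȳ_n) = 1. -/
open MeasureTheory Filter ProbabilityTheory Real

/-- Theorem 2: for i.i.d. real data with finite mean and variance, the Bayes factor based
on the sufficient statistic `ȳₙ`, between the models `𝒩(μ, σ₁²)` and `𝒩(μ, σ₂²)` with
common prior `μ ~ 𝒩(0, a²)`, converges almost surely to `1`. -/
theorem normal_bayes_factor_inconsistent
    {Ω : Type*} [MeasurableSpace Ω] (P : Measure Ω) [IsProbabilityMeasure P]
    (y : ℕ → Ω → ℝ)
    (hmeas : ∀ i, Measurable (y i))
    (hindep : iIndepFun y P)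
    (hident : ∀ i, IdentDistrib (y i) (y 0) P P)
    (hint : Integrable (y 0) P)
    (hvar : MemLp (y 0) 2 P)
    (σ₁ σ₂ a : ℝ) (hσ₁ : 0 < σ₁) (hσ₂ : 0 < σ₂) (ha : 0 < a) :
    ∀ᵐ ω ∂P,
      Tendsto
        (fun n : ℕ =>
          Real.sqrt ((a ^ 2 + σ₂ ^ 2 / n) / (a ^ 2 + σ₁ ^ 2 / n)) *
            Real.exp ((((∑ i ∈ Finset.range n, y i ω) / n) ^ 2 / 2) *
              (1 / (a ^ 2 + σ₂ ^ 2 / n) - 1 / (a ^ 2 + σ₁ ^ 2 / n))))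
        atTop (nhds 1) := by
  have hpair : Pairwise (Function.onFun (IndepFun · · P) y) :=
    fun i j hij => hindep.indepFun hij
  filter_upwards [strong_law_ae_real y hint hpair hident] with ω hω
  have ha2 : (0:ℝ) < a ^ 2 := by positivity
  have h1 : ∀ σ : ℝ, Tendsto (fun n : ℕ => a ^ 2 + σ ^ 2 / n) atTop (nhds (a ^ 2)) := by
    intro σ
    have := tendsto_const_div_atTop_nhds_zero_nat (σ ^ 2)
    simpa using tendsto_const_nhds.add this
  have hsqrt : Tendsto (fun n : ℕ =>
      Real.sqrt ((a ^ 2 + σ₂ ^ 2 / n) / (a ^ 2 + σ₁ ^ 2 / n))) atTop (nhds 1) := by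
    have hdiv : Tendsto (fun n : ℕ => (a ^ 2 + σ₂ ^ 2 / n) / (a ^ 2 + σ₁ ^ 2 / n))
        atTop (nhds 1) := by
      have := (h1 σ₂).div (h1 σ₁) ha2.ne'
      simpa [div_self ha2.ne', Pi.div_def] using this
    have := (Real.continuous_sqrt.tendsto 1).comp hdiv
    simpa [Function.comp_def] using this
  have hexp : Tendsto (fun n : ℕ =>
      Real.exp ((((∑ i ∈ Finset.range n, y i ω) / n) ^ 2 / 2) *
        (1 / (a ^ 2 + σ₂ ^ 2 / n) - 1 / (a ^ 2 + σ₁ ^ 2 / n)))) atTop (nhds 1) := by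
    have harg : Tendsto (fun n : ℕ =>
        (((∑ i ∈ Finset.range n, y i ω) / n) ^ 2 / 2) *
          (1 / (a ^ 2 + σ₂ ^ 2 / n) - 1 / (a ^ 2 + σ₁ ^ 2 / n))) atTop (nhds 0) := by
      have h2 : Tendsto (fun n : ℕ =>
          (1 / (a ^ 2 + σ₂ ^ 2 / n) - 1 / (a ^ 2 + σ₁ ^ 2 / n))) atTop (nhds 0) := by
        have h3 := (((tendsto_const_nhds : Tendsto (fun _ : ℕ => (1:ℝ)) atTop (nhds 1)).div (h1 σ₂) ha2.ne').sub
          ((tendsto_const_nhds : Tendsto (fun _ : ℕ => (1:ℝ)) atTop (nhds 1)).div (h1 σ₁) ha2.ne'))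
        simpa using h3
      have h4 : Tendsto (fun n : ℕ =>
          ((∑ i ∈ Finset.range n, y i ω) / n) ^ 2 / 2) atTop
          (nhds ((P[y 0]) ^ 2 / 2)) := by
        exact ((hω.pow 2).div_const 2)
      simpa using h4.mul h2
    have := (Real.continuous_exp.tendsto 0).comp harg
    simpa [Function.comp_def] using this
  simpa using hsqrt.mul hexp
end
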